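/- Let p ≥ 1 be a real number, L ≥ 0, let d ≥ 1, δ > 0, μ a finite nonnegative Borel measure on [0,δ], and let x⁰ : [−δ,1] → ℝ^d be L-Lipschitz. Let (Ω, 𝓕, P) be a probability space and Z : Ω → C([−δ,1]; ℝ^d) be measurable (with the sup-norm Borel σ-algebra) such that E[ sup_{s∈[−δ,1]} ‖Z(s) − x⁰(s)‖^p ] ≤ A for some A ≥ 0. Then for every integer n ≥ 1, E[ sup_{t∈[0,1]} ‖∫₀^δ Z(⌊nt⌋/n − g_n(u)) μ(du) − ∫₀^δ x⁰(t−u) μ(du)‖^p ] ≤ 2^{p−1} μ([0,δ])^p (A + (2L/n)^p). -/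

import Mathlib

open MeasureTheory Set
open scoped ENNReal NNReal

private lemma real_add_rpow_le {a b p : ℝ} (ha : 0 ≤ a) (hb : 0 ≤ b) (hp : 1 ≤ p) :
    (a + b) ^ p ≤ (2:ℝ) ^ (p - 1) * (a ^ p + b ^ p) := by
  have h := NNReal.rpow_add_le_mul_rpow_add_rpow (⟨a, ha⟩ : ℝ≥0) (⟨b, hb⟩ : ℝ≥0) hp
  have h' := NNReal.coe_le_coe.2 h
  push_cast [NNReal.coe_rpow] at h'
  exact h'

/-- Quantitative `L^p` form of the paper's Lemma 3(ii): if `x⁰` is `L`-Lipschitz on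
`[-δ,1]` and `E[sup_{s∈[-δ,1]} ‖Z(s) - x⁰(s)‖^p] ≤ A`, then for every `n ≥ 1`,
`E[sup_{t∈[0,1]} ‖H_n(Z(⌊nt⌋/n - ·)) - H(x⁰(t-·))‖^p] ≤ 2^{p-1} μ([0,δ])^p (A + (2L/n)^p)`,
where `H_n` uses the grid map `g_n(u) = min(⌊nu⌋/n, ⌊nδ⌋/n)`. -/
theorem delay_functional_Lp_estimate
    (p : ℝ) (hp : 1 ≤ p) (L : ℝ) (hL : 0 ≤ L)
    (d : ℕ) (hd : 1 ≤ d) (δ : ℝ) (hδ : 0 < δ)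
    (μ : Measure ℝ) [IsFiniteMeasure μ]
    (x0 : ℝ → EuclideanSpace ℝ (Fin d))
    (hx0 : ∀ s ∈ Icc (-δ) (1:ℝ), ∀ t ∈ Icc (-δ) (1:ℝ), ‖x0 s - x0 t‖ ≤ L * |s - t|)
    (Ω : Type*) [MeasurableSpace Ω] (P : Measure Ω) [IsProbabilityMeasure P]
    (Z : Ω → ℝ → EuclideanSpace ℝ (Fin d))
    (hZm : Measurable (fun q : Ω × ℝ => Z q.1 q.2))
    (hZc : ∀ ω, ContinuousOn (Z ω) (Icc (-δ) 1))
    (A : ℝ) (hA : 0 ≤ A)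
    (hdist : (∫⁻ ω, ENNReal.ofReal
        (sSup ((fun s => ‖Z ω s - x0 s‖ ^ p) '' Icc (-δ) (1:ℝ))) ∂P) ≤ ENNReal.ofReal A)
    (n : ℕ) (hn : 1 ≤ n) :
    (∫⁻ ω, ENNReal.ofReal (sSup ((fun t =>
        ‖(∫ u in Icc (0:ℝ) δ,
              Z ω ((⌊(n:ℝ) * t⌋₊ : ℝ) / n
                - min ((⌊(n:ℝ) * u⌋₊ : ℝ) / n) ((⌊(n:ℝ) * δ⌋₊ : ℝ) / n)) ∂μ)
            - ∫ u in Icc (0:ℝ) δ, x0 (t - u) ∂μ‖ ^ p) '' Icc (0:ℝ) 1)) ∂P)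
      ≤ ENNReal.ofReal ((2:ℝ) ^ (p - 1) * (μ (Icc (0:ℝ) δ)).toReal ^ p
          * (A + (2 * L / n) ^ p)) := by
  have hp0 : (0:ℝ) < p := lt_of_lt_of_le one_pos hp
  have hn0 : (0:ℝ) < n := by exact_mod_cast hn
  -- notation
  set mI : ℝ := (μ (Icc (0:ℝ) δ)).toReal with hmI
  have hmI0 : 0 ≤ mI := ENNReal.toReal_nonneg
  set c2 : ℝ := 2 * L / n with hc2
  have hc20 : 0 ≤ c2 := by positivity
  set C : ℝ := (2:ℝ) ^ (p - 1) * mI ^ p with hC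
  have hC0 : 0 ≤ C := by positivity
  set c : ℝ := c2 ^ p with hcdef
  have hc0 : 0 ≤ c := Real.rpow_nonneg hc20 p
  -- x0 is Lipschitz hence continuous on Icc (-δ) 1
  have hx0c : ContinuousOn x0 (Icc (-δ) (1:ℝ)) := by
    have : LipschitzOnWith L.toNNReal x0 (Icc (-δ) (1:ℝ)) := by
      apply LipschitzOnWith.of_dist_le_mul
      intro s hs t ht
      rw [dist_eq_norm]
      calc ‖x0 s - x0 t‖ ≤ L * |s - t| := hx0 s hs t ht
        _ = (L.toNNReal : ℝ) * dist s t := by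
            rw [Real.coe_toNNReal L hL, Real.dist_eq]
    exact this.continuousOn
  -- grid map facts
  have hfloor_div_le : ∀ x : ℝ, 0 ≤ x → (⌊(n:ℝ) * x⌋₊ : ℝ) / n ≤ x := by
    intro x hx
    rw [div_le_iff₀ hn0]
    have := Nat.floor_le (mul_nonneg hn0.le hx)
    linarith
  have hfloor_div_gt : ∀ x : ℝ, 0 ≤ x → x - 1 / n ≤ (⌊(n:ℝ) * x⌋₊ : ℝ) / n := by
    intro x hx
    have h := Nat.lt_floor_add_one ((n:ℝ) * x)
    rw [sub_le_iff_le_add, ← add_div, le_div_iff₀ hn0]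
    nlinarith
  -- the grid map g
  set g : ℝ → ℝ := fun u => min ((⌊(n:ℝ) * u⌋₊ : ℝ) / n) ((⌊(n:ℝ) * δ⌋₊ : ℝ) / n) with hg
  have hg_mem : ∀ u ∈ Icc (0:ℝ) δ, g u ∈ Icc (0:ℝ) δ ∧ u - 1/n ≤ g u ∧ g u ≤ u := by
    intro u hu
    obtain ⟨hu0, huδ⟩ := hu
    have h1 : (0:ℝ) ≤ (⌊(n:ℝ) * u⌋₊ : ℝ) / n := by positivity
    have h2 : (0:ℝ) ≤ (⌊(n:ℝ) * δ⌋₊ : ℝ) / n := by positivity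
    have h3 : (⌊(n:ℝ) * u⌋₊ : ℝ) / n ≤ u := hfloor_div_le u hu0
    have h4 : (⌊(n:ℝ) * δ⌋₊ : ℝ) / n ≤ δ := hfloor_div_le δ hδ.le
    have h5 : u - 1/n ≤ (⌊(n:ℝ) * u⌋₊ : ℝ) / n := hfloor_div_gt u hu0
    have h6 : δ - 1/n ≤ (⌊(n:ℝ) * δ⌋₊ : ℝ) / n := hfloor_div_gt δ hδ.le
    refine ⟨⟨le_min h1 h2, le_trans (min_le_left _ _) (le_trans h3 huδ)⟩, ?_, ?_⟩
    · exact le_min h5 (by linarith)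
    · exact le_trans (min_le_left _ _) h3
  have hg_meas : Measurable g := by
    have hmono : Monotone fun u : ℝ => ((⌊(n:ℝ) * u⌋₊ : ℝ)) := by
      intro a b hab
      dsimp only
      exact_mod_cast Nat.floor_mono (mul_le_mul_of_nonneg_left hab hn0.le)
    exact ((hmono.measurable).div_const _).min measurable_const
  -- main pointwise bound
  have hpoint : ∀ ω, ENNReal.ofReal (sSup ((fun t =>
        ‖(∫ u in Icc (0:ℝ) δ,
              Z ω ((⌊(n:ℝ) * t⌋₊ : ℝ) / n
                - min ((⌊(n:ℝ) * u⌋₊ : ℝ) / n) ((⌊(n:ℝ) * δ⌋₊ : ℝ) / n)) ∂μ)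
            - ∫ u in Icc (0:ℝ) δ, x0 (t - u) ∂μ‖ ^ p) '' Icc (0:ℝ) 1))
      ≤ ENNReal.ofReal C * (ENNReal.ofReal
        (sSup ((fun s => ‖Z ω s - x0 s‖ ^ p) '' Icc (-δ) (1:ℝ))) + ENNReal.ofReal c) := by
    intro ω
    set Sp : ℝ := sSup ((fun s => ‖Z ω s - x0 s‖ ^ p) '' Icc (-δ) (1:ℝ)) with hSp
    have hSp0 : 0 ≤ Sp := by
      apply Real.sSup_nonneg
      rintro x ⟨s, _, rfl⟩
      exact Real.rpow_nonneg (norm_nonneg _) p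
    -- boundedness of the image
    have hcont : ContinuousOn (fun s => ‖Z ω s - x0 s‖ ^ p) (Icc (-δ) (1:ℝ)) := by
      exact (((hZc ω).sub hx0c).norm).rpow_const (fun x _ => Or.inr hp0.le)
    have hbdd : BddAbove ((fun s => ‖Z ω s - x0 s‖ ^ p) '' Icc (-δ) (1:ℝ)) :=
      (isCompact_Icc.image_of_continuousOn hcont).bddAbove
    set M : ℝ := Sp ^ p⁻¹ with hM
    have hM0 : 0 ≤ M := Real.rpow_nonneg hSp0 _
    have hMp : M ^ p = Sp := Real.rpow_inv_rpow hSp0 (ne_of_gt hp0)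
    have hZle : ∀ s ∈ Icc (-δ) (1:ℝ), ‖Z ω s - x0 s‖ ≤ M := by
      intro s hs
      have h1 : ‖Z ω s - x0 s‖ ^ p ≤ Sp := le_csSup hbdd ⟨s, hs, rfl⟩
      calc ‖Z ω s - x0 s‖ = (‖Z ω s - x0 s‖ ^ p) ^ p⁻¹ :=
            (Real.rpow_rpow_inv (norm_nonneg _) (ne_of_gt hp0)).symm
        _ ≤ Sp ^ p⁻¹ := Real.rpow_le_rpow (Real.rpow_nonneg (norm_nonneg _) p) h1
            (by positivity)
    -- the real sup bound
    have hsup : sSup ((fun t =>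
        ‖(∫ u in Icc (0:ℝ) δ,
              Z ω ((⌊(n:ℝ) * t⌋₊ : ℝ) / n - g u) ∂μ)
            - ∫ u in Icc (0:ℝ) δ, x0 (t - u) ∂μ‖ ^ p) '' Icc (0:ℝ) 1)
        ≤ C * (Sp + c) := by
      apply Real.sSup_le
      · rintro x ⟨t, ht, rfl⟩
        obtain ⟨ht0, ht1⟩ := ht
        set b : ℝ := (⌊(n:ℝ) * t⌋₊ : ℝ) / n with hb
        have hb0 : 0 ≤ b := by positivity
        have hbt : b ≤ t := hfloor_div_le t ht0
        have hbt' : t - 1/n ≤ b := hfloor_div_gt t ht0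
        have hsmem : ∀ u ∈ Icc (0:ℝ) δ, b - g u ∈ Icc (-δ) (1:ℝ) := by
          intro u hu
          obtain ⟨⟨hgu0, hguδ⟩, _, _⟩ := hg_mem u hu
          constructor <;> [linarith; linarith]
        have htumem : ∀ u ∈ Icc (0:ℝ) δ, t - u ∈ Icc (-δ) (1:ℝ) := by
          intro u hu
          obtain ⟨hu0, huδ⟩ := hu
          constructor <;> [linarith; linarith]
        -- pointwise bound on integrand difference
        have hptwise : ∀ u ∈ Icc (0:ℝ) δ,
            ‖Z ω (b - g u) - x0 (t - u)‖ ≤ M + c2 := by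
          intro u hu
          obtain ⟨hmem, hglb, hgub⟩ := hg_mem u hu
          have h1 : ‖Z ω (b - g u) - x0 (b - g u)‖ ≤ M := hZle _ (hsmem u hu)
          have h2 : ‖x0 (b - g u) - x0 (t - u)‖ ≤ L * |b - g u - (t - u)| :=
            hx0 _ (hsmem u hu) _ (htumem u hu)
          have h3 : |b - g u - (t - u)| ≤ 2 / n := by
            have h1n : (0:ℝ) < 1/n := div_pos one_pos hn0
            have h2n : (2:ℝ)/n = 2 * (1/n) := by ring
            rw [abs_le]
            constructor <;> [linarith; linarith]
          have h4 : L * |b - g u - (t - u)| ≤ c2 := by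
            calc L * |b - g u - (t - u)| ≤ L * (2 / n) :=
                  mul_le_mul_of_nonneg_left h3 hL
              _ = c2 := by rw [hc2]; ring
          calc ‖Z ω (b - g u) - x0 (t - u)‖
              ≤ ‖Z ω (b - g u) - x0 (b - g u)‖ + ‖x0 (b - g u) - x0 (t - u)‖ := by
                have : Z ω (b - g u) - x0 (t - u)
                    = (Z ω (b - g u) - x0 (b - g u)) + (x0 (b - g u) - x0 (t - u)) := by
                  abel
                rw [this]; exact norm_add_le _ _
            _ ≤ M + c2 := add_le_add h1 (le_trans h2 h4)
        -- integrability
        have hZωm : Measurable (Z ω) :=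
          hZm.comp (measurable_const.prodMk measurable_id)
        have hfm : Measurable (fun u => Z ω (b - g u)) :=
          hZωm.comp ((measurable_const.sub hg_meas))
        have hK : ∃ K : ℝ, ∀ s ∈ Icc (-δ) (1:ℝ), ‖x0 s‖ ≤ K := by
          refine ⟨‖x0 0‖ + L * (1 + δ), fun s hs => ?_⟩
          have h0 : (0:ℝ) ∈ Icc (-δ) (1:ℝ) := ⟨by linarith, by linarith⟩
          have := hx0 s hs 0 h0
          have habs : |s - 0| ≤ 1 + δ := by
            rw [sub_zero, abs_le]; obtain ⟨h1, h2⟩ := hs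
            constructor <;> linarith
          calc ‖x0 s‖ ≤ ‖x0 s - x0 0‖ + ‖x0 0‖ := by
                have he : x0 s = (x0 s - x0 0) + x0 0 := by abel
                conv_lhs => rw [he]
                exact norm_add_le _ _
            _ ≤ L * |s - 0| + ‖x0 0‖ := by linarith
            _ ≤ L * (1 + δ) + ‖x0 0‖ := by nlinarith
            _ = ‖x0 0‖ + L * (1 + δ) := by ring
        obtain ⟨K, hKb⟩ := hK
        have hf_int : Integrable (fun u => Z ω (b - g u)) (μ.restrict (Icc (0:ℝ) δ)) := by
          refine ⟨hfm.aestronglyMeasurable, HasFiniteIntegral.of_bounded (C := M + K) ?_⟩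
          filter_upwards [ae_restrict_mem measurableSet_Icc] with u hu
          have hsm := hsmem u hu
          calc ‖Z ω (b - g u)‖
              ≤ ‖Z ω (b - g u) - x0 (b - g u)‖ + ‖x0 (b - g u)‖ := by
                have he : Z ω (b - g u) = (Z ω (b - g u) - x0 (b - g u)) + x0 (b - g u) := by
                  abel
                conv_lhs => rw [he]
                exact norm_add_le _ _
            _ ≤ M + K := add_le_add (hZle _ hsm) (hKb _ hsm)
        have hg_int : Integrable (fun u => x0 (t - u)) (μ.restrict (Icc (0:ℝ) δ)) := by
          apply ContinuousOn.integrableOn_compact isCompact_Icc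
          apply hx0c.comp (continuous_const.sub continuous_id).continuousOn
          intro u hu
          exact htumem u hu
        -- norm of integral difference
        have hnorm : ‖(∫ u in Icc (0:ℝ) δ, Z ω (b - g u) ∂μ)
            - ∫ u in Icc (0:ℝ) δ, x0 (t - u) ∂μ‖ ≤ mI * (M + c2) := by
          rw [← integral_sub hf_int hg_int]
          have := norm_integral_le_of_norm_le_const (μ := μ.restrict (Icc (0:ℝ) δ))
            (f := fun u => Z ω (b - g u) - x0 (t - u)) (C := M + c2)
            (by filter_upwards [ae_restrict_mem measurableSet_Icc] with u hu
                exact hptwise u hu)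
          simp only [Measure.real, Measure.restrict_apply_univ] at this
          calc _ ≤ (M + c2) * mI := this
            _ = mI * (M + c2) := mul_comm _ _
        -- raise to power p
        have h5 : ‖(∫ u in Icc (0:ℝ) δ, Z ω (b - g u) ∂μ)
            - ∫ u in Icc (0:ℝ) δ, x0 (t - u) ∂μ‖ ^ p ≤ (mI * (M + c2)) ^ p :=
          Real.rpow_le_rpow (norm_nonneg _) hnorm hp0.le
        have h6 : (mI * (M + c2)) ^ p = mI ^ p * (M + c2) ^ p :=
          Real.mul_rpow hmI0 (by positivity)
        have h7 : (M + c2) ^ p ≤ (2:ℝ) ^ (p - 1) * (M ^ p + c2 ^ p) :=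
          real_add_rpow_le hM0 hc20 hp
        calc _ ≤ (mI * (M + c2)) ^ p := h5
          _ = mI ^ p * (M + c2) ^ p := h6
          _ ≤ mI ^ p * ((2:ℝ) ^ (p - 1) * (M ^ p + c2 ^ p)) := by
              apply mul_le_mul_of_nonneg_left h7 (Real.rpow_nonneg hmI0 p)
          _ = C * (Sp + c) := by rw [hMp, hC, hcdef]; ring
      · positivity
    calc ENNReal.ofReal _ ≤ ENNReal.ofReal (C * (Sp + c)) := ENNReal.ofReal_le_ofReal hsup
      _ = ENNReal.ofReal C * ENNReal.ofReal (Sp + c) := ENNReal.ofReal_mul hC0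
      _ = ENNReal.ofReal C * (ENNReal.ofReal Sp + ENNReal.ofReal c) := by
          rw [ENNReal.ofReal_add hSp0 hc0]
  -- lintegral computation
  calc _ ≤ ∫⁻ ω, ENNReal.ofReal C * (ENNReal.ofReal
        (sSup ((fun s => ‖Z ω s - x0 s‖ ^ p) '' Icc (-δ) (1:ℝ))) + ENNReal.ofReal c) ∂P :=
      lintegral_mono hpoint
    _ = ENNReal.ofReal C * ((∫⁻ ω, ENNReal.ofReal
        (sSup ((fun s => ‖Z ω s - x0 s‖ ^ p) '' Icc (-δ) (1:ℝ))) ∂P) + ENNReal.ofReal c) := by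
        rw [lintegral_const_mul' _ _ ENNReal.ofReal_ne_top,
          lintegral_add_right' _ aemeasurable_const, lintegral_const, measure_univ, mul_one]
    _ ≤ ENNReal.ofReal C * (ENNReal.ofReal A + ENNReal.ofReal c) := by
        gcongr
    _ = ENNReal.ofReal (C * (A + c)) := by
        rw [← ENNReal.ofReal_add hA hc0, ← ENNReal.ofReal_mul hC0]
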